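/- Let n ≥ 0 and let x, y be the k-linear endomorphisms of the (n+1)-fold tensor power R^{⊗(n+1)} (tensor product over k) determined on pure tensors by x(r_0⊗r_1⊗⋯⊗r_n) = (−1)^n r_n⊗r_0⊗r_1⊗⋯⊗r_{n−1} and y(r_0⊗r_1⊗⋯⊗r_n) = (−1)^{n(n+1)/2} r̄_0⊗r̄_n⊗r̄_{n−1}⊗⋯⊗r̄_1. Then x^{n+1} = id, y² = id, and y∘x∘y = x^{−1} (equivalently x∘y∘x = y), so x and y define an action of the dihedral group D_{n+1} = ⟨x,y | x^{n+1} = y² = 1, yxy = x^{−1}⟩ on R^{⊗(n+1)}. -/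

import Mathlib

open scoped TensorProduct

/-!
STATEMENT 9: The operators `x` and `y` on `R^{⊗(n+1)}` given on pure tensors by
`x(r_0⊗⋯⊗r_n) = (−1)^n r_n⊗r_0⊗⋯⊗r_{n−1}` and
`y(r_0⊗⋯⊗r_n) = (−1)^{n(n+1)/2} r̄_0⊗r̄_n⊗⋯⊗r̄_1` satisfy
`x^{n+1} = 1`, `y² = 1`, `yxy = x^{−1}` (equivalently `xyx = y`), i.e. they
define an action of the dihedral group `D_{n+1}` on `R^{⊗(n+1)}`.
-/

theorem statement9 (k R : Type*) [Field k] [CharZero k] [Ring R] [Algebra k R]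
    (bar : R →ₗ[k] R) (hbar_mul : ∀ r s : R, bar (r * s) = bar s * bar r)
    (hbar_inv : ∀ r : R, bar (bar r) = r) (n : ℕ)
    (x y : Module.End k (⨂[k] _ : Fin (n + 1), R))
    -- `x(r_0⊗r_1⊗⋯⊗r_n) = (−1)^n r_n⊗r_0⊗r_1⊗⋯⊗r_{n−1}`
    (hx : ∀ r : Fin (n + 1) → R,
      x (PiTensorProduct.tprod k r) =
        ((-1 : k) ^ n) • PiTensorProduct.tprod k (fun i => r (i - 1)))
    -- `y(r_0⊗r_1⊗⋯⊗r_n) = (−1)^{n(n+1)/2} r̄_0⊗r̄_n⊗r̄_{n−1}⊗⋯⊗r̄_1`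
    (hy : ∀ r : Fin (n + 1) → R,
      y (PiTensorProduct.tprod k r) =
        ((-1 : k) ^ (n * (n + 1) / 2)) • PiTensorProduct.tprod k (fun i => bar (r (-i)))) :
    x ^ (n + 1) = 1 ∧ y * y = 1 ∧ y * x * y = x ^ n ∧ x * y * x = y := by
  open Fin.NatCast Fin.CommRing in
  set s : k := (-1 : k) ^ (n * (n + 1) / 2) with hs
  have hss : s * s = 1 := by rw [hs, ← pow_add]; exact Even.neg_one_pow ⟨_, rfl⟩
  have key : ∀ (m : ℕ) (r : Fin (n+1) → R), (x ^ m) (PiTensorProduct.tprod k r)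
      = ((-1:k)^(n*m)) • PiTensorProduct.tprod k (fun i => r (i - (m : Fin (n+1)))) := by
    intro m
    induction m with
    | zero => intro r; simp
    | succ m ih =>
      intro r
      rw [pow_succ, Module.End.mul_apply, hx, map_smul, ih, smul_smul, mul_comm, ← pow_add]
      have hfun : (fun i : Fin (n+1) => r (i - (m : Fin (n+1)) - 1))
          = (fun i : Fin (n+1) => r (i - ((m+1 : ℕ) : Fin (n+1)))) := by
        funext i
        congr 1
        push_cast
        ring
      rw [hfun, Nat.mul_succ]
  have hcast : ((n : ℕ) : Fin (n + 1)) = -1 := by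
    have h := Fin.natCast_self (n+1)
    rw [Nat.cast_add, Nat.cast_one] at h
    exact eq_neg_of_add_eq_zero_left h
  refine ⟨?_, ?_, ?_, ?_⟩
  · refine PiTensorProduct.ext (MultilinearMap.ext fun r => ?_)
    simp only [LinearMap.compMultilinearMap_apply, Module.End.one_apply]
    rw [key, Even.neg_one_pow (Nat.even_mul_succ_self n), one_smul]
    congr 1
    funext i
    simp [Fin.natCast_self]
  · refine PiTensorProduct.ext (MultilinearMap.ext fun r => ?_)
    simp only [LinearMap.compMultilinearMap_apply, Module.End.mul_apply, Module.End.one_apply]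
    rw [hy, map_smul, hy, smul_smul, hss, one_smul]
    congr 1
    funext i
    simp [hbar_inv]
  · refine PiTensorProduct.ext (MultilinearMap.ext fun r => ?_)
    simp only [LinearMap.compMultilinearMap_apply, Module.End.mul_apply]
    rw [hy, map_smul, hx, map_smul, map_smul, hy, key, smul_smul, smul_smul]
    have h1 : s * ((-1:k)^n) * s = (-1:k)^n := by
      rw [show s * ((-1:k)^n) * s = (-1:k)^n * (s * s) from by ring, hss, mul_one]
    rw [h1]
    have hsign : (-1:k)^(n*n) = (-1:k)^n := by
      rcases Nat.even_or_odd n with h | h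
      · rw [Even.neg_one_pow h, Even.neg_one_pow (h.mul_left n)]
      · rw [Odd.neg_one_pow h, Odd.neg_one_pow (h.mul h)]
    rw [hsign]
    have hfun : (fun i : Fin (n+1) => bar (bar (r (-(-i - 1)))))
        = (fun i : Fin (n+1) => r (i - (n : Fin (n+1)))) := by
      funext i
      rw [hbar_inv]
      congr 1
      rw [hcast]
      ring
    rw [hfun]
  · refine PiTensorProduct.ext (MultilinearMap.ext fun r => ?_)
    simp only [LinearMap.compMultilinearMap_apply, Module.End.mul_apply]
    rw [hx, map_smul, hy, map_smul, map_smul, hx, smul_smul, smul_smul]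
    have h2 : (-1:k)^n * s * (-1:k)^n = s := by
      rw [show (-1:k)^n * s * (-1:k)^n = s * ((-1:k)^n * (-1:k)^n) from by ring,
        ← pow_add, Even.neg_one_pow ⟨_, rfl⟩, mul_one]
    rw [h2, hy]
    have hfun : (fun i : Fin (n+1) => bar (r (-(i - 1) - 1)))
        = (fun i : Fin (n+1) => bar (r (-i))) := by
      funext i
      congr 1
      ring
    rw [hfun]
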